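/- Let n ∈ ℕ, ω₁, …, ω_n pairwise distinct complex numbers, and m = (m₁, …, m_n) ∈ ℤ_{≥0}^n. Let {a_{h,j}}_{1≤h≤n, 1≤j≤m_h+1} be the complex numbers determined by the partial fraction decomposition 1 / ∏_{h=1}^n (x − ω_h)^{m_h + 1} = Σ_{h=1}^n Σ_{j=1}^{m_h + 1} a_{h,j} / (x − ω_h)^j. Then the formal power series S(z) = Σ_{h=1}^n ( Σ_{j=0}^{m_h} a_{h,j+1} · z^j / j! ) · e^{ω_h z} is a weight-m Padé approximation of (e^{ω₁ z}, …, e^{ω_n z}). -/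

import Mathlib

open PowerSeries Polynomial

/-- `(A₁,…,A_m)` is a weight-`nn` Padé approximant of `f = (f₁,…,f_m)`. -/
def IsPadeApprox {K : Type*} [Field K] {m : ℕ} (f : Fin m → PowerSeries K)
    (nn : Fin m → ℕ) (A : Fin m → Polynomial K) : Prop :=
  A ≠ 0 ∧ (∀ j, (A j).degree ≤ (nn j : ℕ)) ∧
    (((∑ j, (nn j + 1)) - 1 : ℕ) : ℕ∞) ≤ (∑ j, (A j : PowerSeries K) * f j).order

/-- The exponential formal power series `e^{ωz} = Σ_k ω^k z^k / k!`. -/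
noncomputable def expPS (ω : ℂ) : PowerSeries ℂ :=
  PowerSeries.mk fun k => ω ^ k / (k.factorial : ℂ)

/-- Hermite: if the `a h j` (for `1 ≤ j ≤ m_h + 1`) are the partial fraction
coefficients of `1 / ∏_h (x − ω_h)^{m_h+1}`, then
`S(z) = Σ_h (Σ_{j=0}^{m_h} a_{h,j+1} z^j/j!) e^{ω_h z}` is a weight-`m` Padé approximation
of `(e^{ω₁z},…,e^{ω_nz})`, i.e. the polynomials `Σ_{j=0}^{m_h} (a_{h,j+1}/j!) z^j` form a
weight-`m` Padé approximant. -/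
noncomputable def Mser (w : ℂ) (j : ℕ) : PowerSeries ℂ :=
  PowerSeries.mk fun k => if j ≤ k then (k.choose j : ℂ) * w ^ (k - j) else 0

lemma Mser_zero_mul (w : ℂ) :
    Mser w 0 * (1 - PowerSeries.C w * PowerSeries.X) = 1 := by
  have h : Mser w 0 * (1 - PowerSeries.C w * PowerSeries.X)
      = Mser w 0 - PowerSeries.C w * (Mser w 0 * PowerSeries.X) := by ring
  rw [h]
  ext k
  rcases k with _ | k
  · simp [Mser, PowerSeries.coeff_zero_mul_X, PowerSeries.coeff_C_mul]
  · simp [Mser, PowerSeries.coeff_succ_mul_X, PowerSeries.coeff_C_mul,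
      PowerSeries.coeff_one, pow_succ, mul_comm]

lemma Mser_succ_mul (w : ℂ) (j : ℕ) :
    Mser w (j + 1) * (1 - PowerSeries.C w * PowerSeries.X)
      = Mser w j * PowerSeries.X := by
  have h : Mser w (j+1) * (1 - PowerSeries.C w * PowerSeries.X)
      = Mser w (j+1) - PowerSeries.C w * (Mser w (j+1) * PowerSeries.X) := by ring
  rw [h]
  ext k
  rcases k with _ | k
  · simp [Mser, PowerSeries.coeff_zero_mul_X, PowerSeries.coeff_C_mul]
  · rw [map_sub, PowerSeries.coeff_C_mul, PowerSeries.coeff_succ_mul_X,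
      PowerSeries.coeff_succ_mul_X]
    simp only [Mser, PowerSeries.coeff_mk]
    rcases le_or_gt (j+1) k with hle | hlt
    · have h1 : j + 1 ≤ k + 1 := by omega
      have h2 : j ≤ k := by omega
      rw [if_pos h1, if_pos hle, if_pos h2]
      have hch : (k+1).choose (j+1) = k.choose (j+1) + k.choose j := by
        rw [Nat.choose_succ_succ]; ring
      have hsub : k + 1 - (j+1) = (k - (j+1)) + 1 := by omega
      have hsub2 : k - j = (k - (j+1)) + 1 := by omega
      rw [hch, hsub, hsub2]
      push_cast
      ring
    · rcases Nat.lt_or_ge k j with hkj | hkj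
      · have h1 : ¬ (j + 1 ≤ k + 1) := by omega
        have h2 : ¬ (j + 1 ≤ k) := by omega
        have h3 : ¬ (j ≤ k) := by omega
        rw [if_neg h1, if_neg h2, if_neg h3]; ring
      · -- k = j
        have hk : k = j := by omega
        subst hk
        have h1 : k + 1 ≤ k + 1 := le_rfl
        have h2 : ¬ (k + 1 ≤ k) := by omega
        rw [if_pos h1, if_neg h2, if_pos le_rfl]
        simp

lemma Mser_spec (w : ℂ) (j : ℕ) :
    Mser w j * (1 - PowerSeries.C w * PowerSeries.X) ^ (j + 1)
      = PowerSeries.X ^ j := by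
  induction j with
  | zero => simpa using Mser_zero_mul w
  | succ j ih =>
    have : Mser w (j+1) * (1 - PowerSeries.C w * PowerSeries.X) ^ (j + 2)
        = (Mser w (j+1) * (1 - PowerSeries.C w * PowerSeries.X))
          * (1 - PowerSeries.C w * PowerSeries.X) ^ (j + 1) := by ring
    rw [this, Mser_succ_mul, mul_comm (Mser w j) PowerSeries.X, mul_assoc, ih,
      ← pow_succ']

lemma X_pow_mul_geom_pow (w : ℂ) (j : ℕ) :
    PowerSeries.X ^ j * (Mser w 0) ^ (j + 1) = Mser w j := by
  have h := Mser_spec w j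
  have hu : (1 - PowerSeries.C w * PowerSeries.X) * Mser w 0 = 1 := by
    rw [mul_comm]; exact Mser_zero_mul w
  calc PowerSeries.X ^ j * (Mser w 0) ^ (j + 1)
      = Mser w j * ((1 - PowerSeries.C w * PowerSeries.X) * Mser w 0) ^ (j+1) := by
        rw [mul_pow, ← mul_assoc, h]
    _ = Mser w j := by rw [hu, one_pow, mul_one]


lemma star_poly (n : ℕ) (hn : 0 < n) (ω : Fin n → ℂ) (m : Fin n → ℕ) (a : Fin n → ℕ → ℂ)
    (ha : ∀ x : ℂ, (∀ h, x ≠ ω h) →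
      (∏ h, (x - ω h) ^ (m h + 1))⁻¹ =
        ∑ h, ∑ j ∈ Finset.range (m h + 1), a h (j + 1) / (x - ω h) ^ (j + 1)) :
    ∑ h, ∑ j ∈ Finset.range (m h + 1),
        Polynomial.C (a h (j + 1)) * Polynomial.X ^ j
          * (1 - Polynomial.C (ω h) * Polynomial.X) ^ (m h - j)
          * ∏ h' ∈ Finset.univ.erase h,
              (1 - Polynomial.C (ω h') * Polynomial.X) ^ (m h' + 1)
      = Polynomial.X ^ ((∑ h, (m h + 1)) - 1) := by
  set N : ℕ := (∑ h, (m h + 1)) - 1 with hN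
  have hN1 : ∑ h, (m h + 1) = N + 1 := by
    have h1 : 1 ≤ ∑ h, (m h + 1) := by
      calc 1 ≤ ∑ h : Fin n, 1 := by simp; omega
        _ ≤ ∑ h, (m h + 1) := Finset.sum_le_sum fun i _ => by omega
    omega
  have hmN : ∀ h, m h ≤ N := by
    intro h
    have : m h + 1 ≤ ∑ h', (m h' + 1) :=
      Finset.single_le_sum (f := fun h' => m h' + 1) (fun i _ => by omega) (Finset.mem_univ h)
    omega
  have hE : ∀ h : Fin n, ∑ h' ∈ Finset.univ.erase h, (m h' + 1) = N - m h := by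
    intro h
    have h2 : (m h + 1) + ∑ h' ∈ Finset.univ.erase h, (m h' + 1) = ∑ h', (m h' + 1) :=
      Finset.add_sum_erase Finset.univ (fun h' => m h' + 1) (Finset.mem_univ h)
    have := hmN h
    omega
  apply Polynomial.eq_of_infinite_eval_eq
  have hfin : Set.Finite (({0} ∪ Set.range fun h => (ω h)⁻¹ : Set ℂ)) :=
    (Set.finite_singleton 0).union (Set.finite_range _)
  apply Set.Infinite.mono _ hfin.infinite_compl
  intro t ht
  simp only [Set.mem_compl_iff, Set.mem_union, Set.mem_singleton_iff, Set.mem_range,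
    not_or, not_exists] at ht
  obtain ⟨ht0, htω⟩ := ht
  have hP : ∀ h, (1 : ℂ) - ω h * t ≠ 0 := by
    intro h hc
    have h1 : ω h * t = 1 := by linear_combination -hc
    exact htω h (inv_eq_of_mul_eq_one_right h1)
  set x : ℂ := t⁻¹ with hxdef
  have hx : ∀ h, x ≠ ω h := by
    intro h hc
    have hω0 : ω h ≠ 0 := by rw [← hc]; exact inv_ne_zero ht0
    exact htω h (by rw [← hc, inv_inv])
  have hxw : ∀ h, x - ω h = (1 - ω h * t) * t⁻¹ := by
    intro h
    rw [hxdef]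
    field_simp
  set Q : ℂ := ∏ h, (x - ω h) ^ (m h + 1) with hQdef
  have hQ0 : Q ≠ 0 := by
    rw [hQdef]
    apply Finset.prod_ne_zero_iff.2
    intro h _
    exact pow_ne_zero _ (sub_ne_zero.2 (hx h))
  have tpow : ∀ k : ℕ, t ^ k * (t⁻¹) ^ (k + 1) = t⁻¹ := by
    intro k
    rw [pow_succ, ← mul_assoc, ← mul_pow, mul_inv_cancel₀ ht0, one_pow, one_mul]
  simp only [Set.mem_setOf_eq, eval_finset_sum, eval_mul, eval_pow, eval_sub, eval_one,
    eval_C, eval_X, eval_prod]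
  have key : ∀ h : Fin n, ∀ j ∈ Finset.range (m h + 1),
      a h (j + 1) * t ^ j * (1 - ω h * t) ^ (m h - j)
        * ∏ h' ∈ Finset.univ.erase h, (1 - ω h' * t) ^ (m h' + 1)
      = t ^ N * Q * (a h (j + 1) / (x - ω h) ^ (j + 1)) := by
    intro h j hj
    rw [Finset.mem_range] at hj
    have hjm : j ≤ m h := by omega
    have hxh : x - ω h ≠ 0 := sub_ne_zero.2 (hx h)
    have hB : ∏ h' ∈ Finset.univ.erase h, (x - ω h') ^ (m h' + 1)
        = (∏ h' ∈ Finset.univ.erase h, (1 - ω h' * t) ^ (m h' + 1)) * (t⁻¹) ^ (N - m h) := by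
      calc ∏ h' ∈ Finset.univ.erase h, (x - ω h') ^ (m h' + 1)
          = ∏ h' ∈ Finset.univ.erase h,
              ((1 - ω h' * t) ^ (m h' + 1) * (t⁻¹) ^ (m h' + 1)) := by
            refine Finset.prod_congr rfl fun h' _ => ?_
            rw [hxw h', mul_pow]
        _ = _ := by
            rw [Finset.prod_mul_distrib, Finset.prod_pow_eq_pow_sum, hE h]
    have hQh : Q = (x - ω h) ^ (m h + 1) * ∏ h' ∈ Finset.univ.erase h, (x - ω h') ^ (m h' + 1) :=
      (Finset.mul_prod_erase _ _ (Finset.mem_univ h)).symm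
    have hQfull : Q = (∏ h', (1 - ω h' * t) ^ (m h' + 1)) * (t⁻¹) ^ (N + 1) := by
      calc Q = ∏ h', ((1 - ω h' * t) ^ (m h' + 1) * (t⁻¹) ^ (m h' + 1)) := by
            rw [hQdef]; exact Finset.prod_congr rfl fun h' _ => by rw [hxw h', mul_pow]
        _ = _ := by rw [Finset.prod_mul_distrib, Finset.prod_pow_eq_pow_sum, hN1]
    have hPfull : (∏ h', (1 - ω h' * t) ^ (m h' + 1))
        = (1 - ω h * t) ^ (m h + 1)
          * ∏ h' ∈ Finset.univ.erase h, (1 - ω h' * t) ^ (m h' + 1) :=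
      (Finset.mul_prod_erase _ _ (Finset.mem_univ h)).symm
    have e3 : (1 - ω h * t) ^ (m h - j) * (1 - ω h * t) ^ (j + 1)
        = (1 - ω h * t) ^ (m h + 1) := by
      rw [← pow_add]; congr 1; omega
    rw [mul_div_assoc' (t ^ N * Q), eq_div_iff (pow_ne_zero _ hxh)]
    rw [hxw h, mul_pow, hQfull, hPfull]
    calc a h (j + 1) * t ^ j * (1 - ω h * t) ^ (m h - j)
          * (∏ h' ∈ Finset.univ.erase h, (1 - ω h' * t) ^ (m h' + 1))
          * ((1 - ω h * t) ^ (j + 1) * (t⁻¹) ^ (j + 1))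
        = a h (j + 1) * (∏ h' ∈ Finset.univ.erase h, (1 - ω h' * t) ^ (m h' + 1))
            * (((1 - ω h * t) ^ (m h - j) * (1 - ω h * t) ^ (j + 1))
              * (t ^ j * (t⁻¹) ^ (j + 1))) := by ring
      _ = a h (j + 1) * (∏ h' ∈ Finset.univ.erase h, (1 - ω h' * t) ^ (m h' + 1))
            * ((1 - ω h * t) ^ (m h + 1) * t⁻¹) := by rw [e3, tpow j]
      _ = a h (j + 1) * (∏ h' ∈ Finset.univ.erase h, (1 - ω h' * t) ^ (m h' + 1))
            * ((1 - ω h * t) ^ (m h + 1) * (t ^ N * (t⁻¹) ^ (N + 1))) := by rw [tpow N]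
      _ = t ^ N * ((1 - ω h * t) ^ (m h + 1)
            * (∏ h' ∈ Finset.univ.erase h, (1 - ω h' * t) ^ (m h' + 1)) * (t⁻¹) ^ (N + 1))
            * a h (j + 1) := by ring
  calc ∑ h, ∑ j ∈ Finset.range (m h + 1),
        a h (j + 1) * t ^ j * (1 - ω h * t) ^ (m h - j)
          * ∏ h' ∈ Finset.univ.erase h, (1 - ω h' * t) ^ (m h' + 1)
      = ∑ h, ∑ j ∈ Finset.range (m h + 1),
          t ^ N * Q * (a h (j + 1) / (x - ω h) ^ (j + 1)) :=
        Finset.sum_congr rfl fun h _ => Finset.sum_congr rfl (key h)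
    _ = t ^ N * Q * ∑ h, ∑ j ∈ Finset.range (m h + 1),
          a h (j + 1) / (x - ω h) ^ (j + 1) := by
        rw [Finset.mul_sum]
        exact Finset.sum_congr rfl fun h _ => (Finset.mul_sum _ _ _).symm
    _ = t ^ N * Q * Q⁻¹ := by rw [← ha x hx]
    _ = t ^ N := by rw [mul_assoc, mul_inv_cancel₀ hQ0, mul_one]

lemma sum_ite_le (A B : ℕ) (f : ℕ → ℂ) :
    ∑ j ∈ Finset.range (A + 1), (if j ≤ B then f j else 0)
      = ∑ j ∈ Finset.range (min A B + 1), f j := by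
  have hsub : Finset.range (min A B + 1) ⊆ Finset.range (A + 1) :=
    Finset.range_subset_range.2 (by omega)
  have h1 : ∑ j ∈ Finset.range (A + 1), (if j ≤ B then f j else 0)
      = ∑ j ∈ Finset.range (min A B + 1), (if j ≤ B then f j else 0) := by
    symm
    apply Finset.sum_subset hsub
    intro x hx hnx
    simp only [Finset.mem_range] at hx hnx
    rw [if_neg (by omega)]
  rw [h1]
  refine Finset.sum_congr rfl fun x hx => ?_
  simp only [Finset.mem_range] at hx
  rw [if_pos (by omega)]

lemma sum_ite_comm (A B : ℕ) (f : ℕ → ℂ) :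
    ∑ j ∈ Finset.range (A + 1), (if j ≤ B then f j else 0)
      = ∑ j ∈ Finset.range (B + 1), (if j ≤ A then f j else 0) := by
  rw [sum_ite_le, sum_ite_le, Nat.min_comm]

lemma coeffA (mh : ℕ) (b : ℕ → ℂ) (l : ℕ) :
    (∑ j ∈ Finset.range (mh + 1), Polynomial.C (b j) * Polynomial.X ^ j).coeff l
      = if l ≤ mh then b l else 0 := by
  rw [Polynomial.finset_sum_coeff]
  simp only [Polynomial.coeff_C_mul, Polynomial.coeff_X_pow, mul_ite, mul_one, mul_zero]
  rw [Finset.sum_ite_eq (Finset.range (mh + 1)) l b]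
  simp [Nat.lt_succ_iff]

lemma key_term (n : ℕ) (ω : Fin n → ℂ) (m : Fin n → ℕ) (h : Fin n) (j : ℕ) (hjm : j ≤ m h)
    (c : ℂ) :
    (PowerSeries.C c * PowerSeries.X ^ j
        * (1 - PowerSeries.C (ω h) * PowerSeries.X) ^ (m h - j)
        * ∏ h' ∈ Finset.univ.erase h,
            (1 - PowerSeries.C (ω h') * PowerSeries.X) ^ (m h' + 1))
      * ∏ h', (Mser (ω h') 0) ^ (m h' + 1)
    = PowerSeries.C c * Mser (ω h) j := by
  have hug : ∀ h' : Fin n, (1 - PowerSeries.C (ω h') * PowerSeries.X) * Mser (ω h') 0 = 1 :=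
    fun h' => by rw [mul_comm]; exact Mser_zero_mul (ω h')
  have hV : (∏ h', (Mser (ω h') 0) ^ (m h' + 1))
      = (Mser (ω h) 0) ^ (m h + 1)
        * ∏ h' ∈ Finset.univ.erase h, (Mser (ω h') 0) ^ (m h' + 1) :=
    (Finset.mul_prod_erase _ _ (Finset.mem_univ h)).symm
  have h1 : (∏ h' ∈ Finset.univ.erase h,
        (1 - PowerSeries.C (ω h') * PowerSeries.X) ^ (m h' + 1))
      * ∏ h' ∈ Finset.univ.erase h, (Mser (ω h') 0) ^ (m h' + 1) = 1 := by
    rw [← Finset.prod_mul_distrib]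
    calc ∏ h' ∈ Finset.univ.erase h,
          ((1 - PowerSeries.C (ω h') * PowerSeries.X) ^ (m h' + 1)
            * (Mser (ω h') 0) ^ (m h' + 1))
        = ∏ _h' ∈ Finset.univ.erase h, (1 : PowerSeries ℂ) := by
          refine Finset.prod_congr rfl fun h' _ => ?_
          rw [← mul_pow, hug h', one_pow]
      _ = 1 := Finset.prod_const_one
  have h2 : (Mser (ω h) 0) ^ (m h + 1)
      = (Mser (ω h) 0) ^ (j + 1) * (Mser (ω h) 0) ^ (m h - j) := by
    rw [← pow_add]; congr 1; omega
  have h3 : (1 - PowerSeries.C (ω h) * PowerSeries.X) ^ (m h - j)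
      * (Mser (ω h) 0) ^ (m h - j) = 1 := by
    rw [← mul_pow, hug h, one_pow]
  calc (PowerSeries.C c * PowerSeries.X ^ j
        * (1 - PowerSeries.C (ω h) * PowerSeries.X) ^ (m h - j)
        * ∏ h' ∈ Finset.univ.erase h,
            (1 - PowerSeries.C (ω h') * PowerSeries.X) ^ (m h' + 1))
      * ∏ h', (Mser (ω h') 0) ^ (m h' + 1)
      = PowerSeries.C c * (PowerSeries.X ^ j * (Mser (ω h) 0) ^ (j + 1))
          * ((1 - PowerSeries.C (ω h) * PowerSeries.X) ^ (m h - j)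
            * (Mser (ω h) 0) ^ (m h - j))
          * ((∏ h' ∈ Finset.univ.erase h,
              (1 - PowerSeries.C (ω h') * PowerSeries.X) ^ (m h' + 1))
            * ∏ h' ∈ Finset.univ.erase h, (Mser (ω h') 0) ^ (m h' + 1)) := by
        rw [hV, h2]; ring
    _ = PowerSeries.C c * Mser (ω h) j := by
        rw [h1, h3, X_pow_mul_geom_pow, mul_one, mul_one]


lemma master (n : ℕ) (hn : 0 < n) (ω : Fin n → ℂ) (m : Fin n → ℕ) (a : Fin n → ℕ → ℂ)
    (ha : ∀ x : ℂ, (∀ h, x ≠ ω h) →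
      (∏ h, (x - ω h) ^ (m h + 1))⁻¹ =
        ∑ h, ∑ j ∈ Finset.range (m h + 1), a h (j + 1) / (x - ω h) ^ (j + 1)) :
    ∑ h, ∑ j ∈ Finset.range (m h + 1), PowerSeries.C (a h (j + 1)) * Mser (ω h) j
      = PowerSeries.X ^ ((∑ h, (m h + 1)) - 1) * ∏ h', (Mser (ω h') 0) ^ (m h' + 1) := by
  have star := congrArg (Polynomial.coeToPowerSeries.ringHom (R := ℂ)) (star_poly n hn ω m a ha)
  simp only [map_sum, map_mul, map_pow, map_prod, map_sub, map_one,
    Polynomial.coeToPowerSeries.ringHom_apply, Polynomial.coe_C, Polynomial.coe_X] at star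
  calc ∑ h, ∑ j ∈ Finset.range (m h + 1), PowerSeries.C (a h (j + 1)) * Mser (ω h) j
      = (∑ h, ∑ j ∈ Finset.range (m h + 1),
          PowerSeries.C (a h (j + 1)) * PowerSeries.X ^ j
            * (1 - PowerSeries.C (ω h) * PowerSeries.X) ^ (m h - j)
            * ∏ h' ∈ Finset.univ.erase h,
                (1 - PowerSeries.C (ω h') * PowerSeries.X) ^ (m h' + 1))
          * ∏ h', (Mser (ω h') 0) ^ (m h' + 1) := by
        rw [Finset.sum_mul]
        refine Finset.sum_congr rfl fun h _ => ?_
        rw [Finset.sum_mul]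
        refine Finset.sum_congr rfl fun j hj => ?_
        rw [key_term n ω m h j (Nat.lt_succ_iff.mp (Finset.mem_range.mp hj))]
    _ = PowerSeries.X ^ ((∑ h, (m h + 1)) - 1) * ∏ h', (Mser (ω h') 0) ^ (m h' + 1) := by
        rw [star]
theorem hermite_pade_exp (n : ℕ) (hn : 0 < n) (ω : Fin n → ℂ) (hω : Function.Injective ω)
    (m : Fin n → ℕ) (a : Fin n → ℕ → ℂ)
    (ha : ∀ x : ℂ, (∀ h, x ≠ ω h) →
      (∏ h, (x - ω h) ^ (m h + 1))⁻¹ =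
        ∑ h, ∑ j ∈ Finset.range (m h + 1), a h (j + 1) / (x - ω h) ^ (j + 1)) :
    IsPadeApprox (fun h => expPS (ω h)) m
      (fun h => ∑ j ∈ Finset.range (m h + 1),
        Polynomial.C (a h (j + 1) / (j.factorial : ℂ)) * Polynomial.X ^ j) := by
  refine ⟨?_, ?_, ?_⟩
  · -- nonvanishing
    intro hA0
    obtain ⟨x, hx'⟩ := (Set.finite_range ω).infinite_compl.nonempty
    have hx : ∀ h, x ≠ ω h := fun h hc => hx' ⟨h, hc.symm⟩
    have hQ0 : (∏ h, (x - ω h) ^ (m h + 1)) ≠ 0 :=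
      Finset.prod_ne_zero_iff.2 fun h _ => pow_ne_zero _ (sub_ne_zero.2 (hx h))
    have h0 := ha x hx
    have haz : ∀ h : Fin n, ∀ j, j ≤ m h → a h (j + 1) = 0 := by
      intro h j hj
      have h1 := congrArg (fun p => Polynomial.coeff p j) (congrFun hA0 h)
      simp only [Pi.zero_apply, Polynomial.coeff_zero] at h1
      rw [coeffA (m h) (fun j => a h (j + 1) / (j.factorial : ℂ)) j, if_pos hj] at h1
      have hfac : ((j.factorial : ℂ)) ≠ 0 := Nat.cast_ne_zero.2 (Nat.factorial_ne_zero j)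
      field_simp at h1
      simpa using h1
    rw [Finset.sum_eq_zero (fun h _ => Finset.sum_eq_zero fun j hj => by
      rw [haz h j (Nat.lt_succ_iff.mp (Finset.mem_range.mp hj)), zero_div])] at h0
    exact inv_ne_zero hQ0 h0
  · -- degrees
    intro h
    dsimp only
    refine (Polynomial.degree_sum_le _ _).trans ?_
    refine Finset.sup_le fun j hj => ?_
    refine (Polynomial.degree_C_mul_X_pow_le _ _).trans ?_
    exact_mod_cast Nat.cast_le.2 (Nat.lt_succ_iff.mp (Finset.mem_range.mp hj))
  · -- order
    dsimp only
    apply PowerSeries.nat_le_order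
    intro i hi
    have hvan : PowerSeries.coeff i
        (∑ h, ∑ j ∈ Finset.range (m h + 1), PowerSeries.C (a h (j + 1)) * Mser (ω h) j)
          = 0 := by
      rw [master n hn ω m a ha]
      exact (PowerSeries.X_pow_dvd_iff.mp (dvd_mul_right _ _)) i hi
    have hfac : ((i.factorial : ℂ)) ≠ 0 := Nat.cast_ne_zero.2 (Nat.factorial_ne_zero i)
    have hterm : ∀ h : Fin n,
        (i.factorial : ℂ) * PowerSeries.coeff i
          ((↑(∑ j ∈ Finset.range (m h + 1),
              Polynomial.C (a h (j + 1) / (j.factorial : ℂ)) * Polynomial.X ^ j : Polynomial ℂ)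
                : PowerSeries ℂ) * expPS (ω h))
        = PowerSeries.coeff i
            (∑ j ∈ Finset.range (m h + 1), PowerSeries.C (a h (j + 1)) * Mser (ω h) j) := by
      intro h
      have step2 : PowerSeries.coeff i
          (∑ j ∈ Finset.range (m h + 1), PowerSeries.C (a h (j + 1)) * Mser (ω h) j)
          = ∑ l ∈ Finset.range (i + 1),
              (if l ≤ m h then a h (l + 1) * (i.choose l : ℂ) * ω h ^ (i - l) else 0) := by
        rw [map_sum]
        simp only [PowerSeries.coeff_C_mul, Mser, PowerSeries.coeff_mk, mul_ite, mul_zero]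
        rw [← sum_ite_comm (m h) i (fun j => a h (j + 1) * (i.choose j : ℂ) * ω h ^ (i - j))]
        refine Finset.sum_congr rfl fun j _ => ?_
        split_ifs with hji
        · ring
        · rfl
      rw [step2, PowerSeries.coeff_mul, Finset.Nat.sum_antidiagonal_eq_sum_range_succ_mk,
        Finset.mul_sum]
      refine Finset.sum_congr rfl fun l hl => ?_
      have hli : l ≤ i := Nat.lt_succ_iff.mp (Finset.mem_range.mp hl)
      rw [Polynomial.coeff_coe,
        coeffA (m h) (fun j => a h (j + 1) / (j.factorial : ℂ)) l]
      simp only [expPS, PowerSeries.coeff_mk]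
      split_ifs with hcase
      · have hch : ((i.choose l : ℂ)) * (l.factorial : ℂ) * ((i - l).factorial : ℂ)
            = (i.factorial : ℂ) := by
          exact_mod_cast congrArg (Nat.cast : ℕ → ℂ)
            (Nat.choose_mul_factorial_mul_factorial hli)
        have hf1 : ((l.factorial : ℂ)) ≠ 0 := Nat.cast_ne_zero.2 (Nat.factorial_ne_zero l)
        have hf2 : (((i - l).factorial : ℂ)) ≠ 0 := Nat.cast_ne_zero.2 (Nat.factorial_ne_zero _)
        rw [← hch]
        field_simp
      · simp
    have hSsum : (i.factorial : ℂ) * PowerSeries.coeff i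
        (∑ h, (↑(∑ j ∈ Finset.range (m h + 1),
            Polynomial.C (a h (j + 1) / (j.factorial : ℂ)) * Polynomial.X ^ j : Polynomial ℂ)
              : PowerSeries ℂ) * expPS (ω h)) = 0 := by
      rw [map_sum, Finset.mul_sum]
      rw [Finset.sum_congr rfl fun h _ => hterm h]
      rw [← map_sum]
      exact hvan
    have := mul_eq_zero.mp hSsum
    tauto
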